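/- Let d ∈ ℕ, α > 0, σ > 0, let μ be a probability measure on ℝ^d, and define p(x) = ∫_{ℝ^d} φ_σ(x − α y) dμ(y) where φ_σ(x) = (2πσ²)^{−d/2} exp(−‖x‖²/(2σ²)). Then for every x ∈ ℝ^d, ∇ log p(x) = (1/σ²) · ( −x + α · ( ∫_{ℝ^d} φ_σ(x − α y) y dμ(y) ) / ( ∫_{ℝ^d} φ_σ(x − α y) dμ(y) ) ), i.e. the score of the noise-perturbed marginal density equals the stated ratio of two integrals against the data distribution. -/

import Mathlib

open MeasureTheory ProbabilityTheory Real

/-- The centered Gaussian density with scale `σ` on `ℝ^d`: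
`φ_σ(x) = (2πσ²)^{−d/2} exp(−‖x‖²/(2σ²))`. -/
noncomputable def gaussDensity (d : ℕ) (σ : ℝ) (x : EuclideanSpace ℝ (Fin d)) : ℝ :=
  (2 * π * σ ^ 2) ^ (-(d : ℝ) / 2) * Real.exp (-‖x‖ ^ 2 / (2 * σ ^ 2))

lemma gaussDensity_pos {d : ℕ} {σ : ℝ} (hσ : 0 < σ) (z : EuclideanSpace ℝ (Fin d)) :
    0 < gaussDensity d σ z := by
  have h2 : (0:ℝ) < 2 * π * σ ^ 2 := by positivity
  unfold gaussDensity
  positivity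

lemma gaussDensity_le {d : ℕ} {σ : ℝ} (hσ : 0 < σ) (z : EuclideanSpace ℝ (Fin d)) :
    gaussDensity d σ z ≤ (2 * π * σ ^ 2) ^ (-(d : ℝ) / 2) := by
  have h2 : (0:ℝ) < 2 * π * σ ^ 2 := by positivity
  have hC : (0:ℝ) < (2 * π * σ ^ 2) ^ (-(d : ℝ) / 2) := by positivity
  have : Real.exp (-‖z‖ ^ 2 / (2 * σ ^ 2)) ≤ 1 := by
    apply Real.exp_le_one_iff.2
    have : (0:ℝ) ≤ ‖z‖ ^ 2 / (2 * σ ^ 2) := by positivity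
    linarith [neg_div (2*σ^2) (‖z‖^2)]
  calc gaussDensity d σ z ≤ (2 * π * σ ^ 2) ^ (-(d : ℝ) / 2) * 1 := by
        unfold gaussDensity; exact mul_le_mul_of_nonneg_left this hC.le
    _ = _ := mul_one _

lemma gaussDensity_mul_norm_le {d : ℕ} {σ : ℝ} (hσ : 0 < σ) (z : EuclideanSpace ℝ (Fin d)) :
    gaussDensity d σ z * ‖z‖ ≤ (2 * π * σ ^ 2) ^ (-(d : ℝ) / 2) * σ := by
  have hC : (0:ℝ) < (2 * π * σ ^ 2) ^ (-(d : ℝ) / 2) := by positivity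
  have key : Real.exp (-‖z‖ ^ 2 / (2 * σ ^ 2)) * ‖z‖ ≤ σ := by
    rw [neg_div, Real.exp_neg, inv_mul_le_iff₀ (Real.exp_pos _)]
    have e1 : σ * (‖z‖ ^ 2 / (2 * σ ^ 2) + 1) = ‖z‖ ^ 2 / (2 * σ) + σ := by
      field_simp
    have e2 : ‖z‖ ≤ ‖z‖ ^ 2 / (2 * σ) + σ := by
      rw [← sub_nonneg]
      have : ‖z‖ ^ 2 / (2 * σ) + σ - ‖z‖ = ((‖z‖ - σ) ^ 2 + σ ^ 2) / (2 * σ) := by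
        field_simp; ring
      rw [this]; positivity
    have e3 : σ * (‖z‖ ^ 2 / (2 * σ ^ 2) + 1) ≤ σ * Real.exp (‖z‖ ^ 2 / (2 * σ ^ 2)) :=
      mul_le_mul_of_nonneg_left (Real.add_one_le_exp _) hσ.le
    calc ‖z‖ ≤ σ * (‖z‖ ^ 2 / (2 * σ ^ 2) + 1) := by rw [e1]; exact e2
      _ ≤ σ * Real.exp (‖z‖ ^ 2 / (2 * σ ^ 2)) := e3
      _ = Real.exp (‖z‖ ^ 2 / (2 * σ ^ 2)) * σ := mul_comm _ _
  calc gaussDensity d σ z * ‖z‖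
      = (2 * π * σ ^ 2) ^ (-(d : ℝ) / 2) * (Real.exp (-‖z‖ ^ 2 / (2 * σ ^ 2)) * ‖z‖) := by
        unfold gaussDensity; ring
    _ ≤ _ := mul_le_mul_of_nonneg_left key hC.le

lemma hasFDerivAt_gauss {d : ℕ} {σ : ℝ} (hσ : 0 < σ) (z : EuclideanSpace ℝ (Fin d)) :
    HasFDerivAt (gaussDensity d σ)
      ((-(σ ^ 2)⁻¹ * gaussDensity d σ z) • innerSL ℝ z) z := by
  have h1 : HasFDerivAt (fun w : EuclideanSpace ℝ (Fin d) => ‖w‖ ^ 2) (2 • innerSL ℝ z) z := by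
    simpa using (hasFDerivAt_id z).norm_sq
  have heq : (fun w : EuclideanSpace ℝ (Fin d) => -‖w‖ ^ 2 / (2 * σ ^ 2))
      = fun w => (-(2 * σ ^ 2)⁻¹) * ‖w‖ ^ 2 := by
    funext w; ring
  have h2 : HasFDerivAt (fun w : EuclideanSpace ℝ (Fin d) => -‖w‖ ^ 2 / (2 * σ ^ 2))
      ((-(2 * σ ^ 2)⁻¹) • (2 • innerSL ℝ z)) z := by
    rw [heq]; exact h1.const_mul _
  have h3 := h2.exp
  have h4 := h3.const_mul ((2 * π * σ ^ 2) ^ (-(d : ℝ) / 2))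
  have hsne : (σ:ℝ) ^ 2 ≠ 0 := by positivity
  have h5 : (((2 * π * σ ^ 2) ^ (-(d : ℝ) / 2) : ℝ) •
      (Real.exp (-‖z‖ ^ 2 / (2 * σ ^ 2)) • ((-(2 * σ ^ 2)⁻¹) • (2 • innerSL ℝ z))))
      = (-(σ ^ 2)⁻¹ * gaussDensity d σ z) • innerSL ℝ z := by
    ext w
    simp only [ContinuousLinearMap.smul_apply, smul_eq_mul, nsmul_eq_mul, Nat.cast_ofNat,
      gaussDensity]
    field_simp
  rw [← h5]
  exact h4

set_option maxHeartbeats 1000000 in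
set_option synthInstance.maxHeartbeats 400000 in
/-- the score of the noise-perturbed marginal density
`p(x) = ∫ φ_σ(x − α y) dμ(y)` satisfies
`∇ log p(x) = (1/σ²)(−x + α (∫ φ_σ(x − α y) y dμ(y)) / (∫ φ_σ(x − α y) dμ(y)))`. -/
theorem stmt_3 (d : ℕ) (α σ : ℝ) (hα : 0 < α) (hσ : 0 < σ)
    (μ : Measure (EuclideanSpace ℝ (Fin d))) [IsProbabilityMeasure μ]
    (x : EuclideanSpace ℝ (Fin d)) :
    gradient (fun x' => Real.log (∫ y, gaussDensity d σ (x' - α • y) ∂μ)) x =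
      (1 / σ ^ 2) • (-x + α •
        ((∫ y, gaussDensity d σ (x - α • y) ∂μ)⁻¹ •
          ∫ y, gaussDensity d σ (x - α • y) • y ∂μ)) := by
  set C : ℝ := (2 * π * σ ^ 2) ^ (-(d : ℝ) / 2) with hCdef
  have hCpos : 0 < C := by rw [hCdef]; positivity
  have hσ2 : (σ:ℝ) ^ 2 ≠ 0 := by positivity
  have φcont : Continuous (gaussDensity d σ) := by
    unfold gaussDensity; fun_prop
  have hzcont : ∀ x' : EuclideanSpace ℝ (Fin d),
      Continuous (fun y : EuclideanSpace ℝ (Fin d) => x' - α • y) := fun x' => by fun_prop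
  have hFmeas : ∀ x' : EuclideanSpace ℝ (Fin d),
      AEStronglyMeasurable (fun y : EuclideanSpace ℝ (Fin d) =>
        gaussDensity d σ (x' - α • y)) μ :=
    fun x' => (φcont.comp (hzcont x')).aestronglyMeasurable
  have hFint : ∀ x' : EuclideanSpace ℝ (Fin d),
      Integrable (fun y => gaussDensity d σ (x' - α • y)) μ := fun x' =>
    (integrable_const C).mono' (hFmeas x') (Filter.Eventually.of_forall fun y => by
      rw [Real.norm_eq_abs, abs_of_pos (gaussDensity_pos hσ _)]
      exact gaussDensity_le hσ _)
  set p : EuclideanSpace ℝ (Fin d) → ℝ :=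
    fun x' => ∫ y, gaussDensity d σ (x' - α • y) ∂μ with hpdef
  have hppos : 0 < p x := by
    refine (integral_pos_iff_support_of_nonneg
      (fun y => (gaussDensity_pos hσ _).le) (hFint x)).2 ?_
    have hs : (Function.support fun y : EuclideanSpace ℝ (Fin d) =>
        gaussDensity d σ (x - α • y)) = Set.univ :=
      Set.eq_univ_of_forall fun y => (gaussDensity_pos hσ _).ne'
    rw [hs]
    simp
  have hpne : p x ≠ 0 := hppos.ne'
  set F' : EuclideanSpace ℝ (Fin d) → EuclideanSpace ℝ (Fin d) →
      (EuclideanSpace ℝ (Fin d) →L[ℝ] ℝ) :=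
    fun x' y => (-(σ ^ 2)⁻¹ * gaussDensity d σ (x' - α • y)) • innerSL ℝ (x' - α • y)
    with hF'def
  have hdiff : ∀ (y x' : EuclideanSpace ℝ (Fin d)),
      HasFDerivAt (fun x'' => gaussDensity d σ (x'' - α • y)) (F' x' y) x' := by
    intro y x'
    have h : HasFDerivAt (fun x'' => gaussDensity d σ (x'' - α • y))
        (((-(σ ^ 2)⁻¹ * gaussDensity d σ (x' - α • y)) • innerSL ℝ (x' - α • y)).comp
          (ContinuousLinearMap.id ℝ (EuclideanSpace ℝ (Fin d)))) x' := by
      have := (hasFDerivAt_gauss hσ (x' - α • y)).comp x'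
        ((hasFDerivAt_id x').sub_const (α • y))
      exact this
    rw [ContinuousLinearMap.comp_id] at h
    exact h
  have hbound : ∀ (y x' : EuclideanSpace ℝ (Fin d)), ‖F' x' y‖ ≤ C / σ := by
    intro y x'
    show ‖(-(σ ^ 2)⁻¹ * gaussDensity d σ (x' - α • y)) • innerSL ℝ (x' - α • y)‖ ≤ C / σ
    rw [norm_smul (-(σ ^ 2)⁻¹ * gaussDensity d σ (x' - α • y)) (innerSL ℝ (x' - α • y)),
      innerSL_apply_norm]
    have h1 : ‖-(σ ^ 2)⁻¹ * gaussDensity d σ (x' - α • y)‖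
        = (σ ^ 2)⁻¹ * gaussDensity d σ (x' - α • y) := by
      rw [Real.norm_eq_abs, abs_mul, abs_neg, abs_inv,
        abs_of_pos (by positivity : (0:ℝ) < σ ^ 2), abs_of_pos (gaussDensity_pos hσ _)]
    rw [h1, mul_assoc]
    calc (σ ^ 2)⁻¹ * (gaussDensity d σ (x' - α • y) * ‖x' - α • y‖)
        ≤ (σ ^ 2)⁻¹ * (C * σ) :=
          mul_le_mul_of_nonneg_left (gaussDensity_mul_norm_le hσ _) (by positivity)
      _ = C / σ := by field_simp
  have hF'cont : Continuous (fun y : EuclideanSpace ℝ (Fin d) => F' x y) := by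
    rw [hF'def]
    exact (continuous_const.mul (φcont.comp (hzcont x))).smul
      ((innerSL ℝ).continuous.comp (hzcont x))
  have hF'int : Integrable (fun y : EuclideanSpace ℝ (Fin d) => F' x y) μ :=
    (integrable_const (C / σ)).mono' hF'cont.aestronglyMeasurable
      (Filter.Eventually.of_forall fun y => hbound y x)
  have hp : HasFDerivAt p (∫ y, F' x y ∂μ) x :=
    hasFDerivAt_integral_of_dominated_of_fderiv_le (s := Metric.ball x 1) (Metric.ball_mem_nhds x one_pos)
      (Filter.Eventually.of_forall fun x' => hFmeas x') (hFint x)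
      hF'cont.aestronglyMeasurable
      (Filter.Eventually.of_forall fun y x' _ => hbound y x')
      (integrable_const _)
      (Filter.Eventually.of_forall fun y x' _ => hdiff y x')
  set g : EuclideanSpace ℝ (Fin d) → EuclideanSpace ℝ (Fin d) :=
    fun y => (-(σ ^ 2)⁻¹ * gaussDensity d σ (x - α • y)) • (x - α • y) with hgdef
  have hgcont : Continuous g := by
    rw [hgdef]
    exact (continuous_const.mul (φcont.comp (hzcont x))).smul (hzcont x)
  have hgint : Integrable g μ :=
    (integrable_const (C / σ)).mono' hgcont.aestronglyMeasurable
      (Filter.Eventually.of_forall fun y => by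
        show ‖(-(σ ^ 2)⁻¹ * gaussDensity d σ (x - α • y)) • (x - α • y)‖ ≤ C / σ
        rw [norm_smul, Real.norm_eq_abs, abs_mul, abs_neg, abs_inv,
          abs_of_pos (by positivity : (0:ℝ) < σ ^ 2), abs_of_pos (gaussDensity_pos hσ _),
          mul_assoc]
        calc (σ ^ 2)⁻¹ * (gaussDensity d σ (x - α • y) * ‖x - α • y‖)
            ≤ (σ ^ 2)⁻¹ * (C * σ) :=
              mul_le_mul_of_nonneg_left (gaussDensity_mul_norm_le hσ _) (by positivity)
          _ = C / σ := by field_simp)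
  have key : (∫ y, F' x y ∂μ)
      = (InnerProductSpace.toDual ℝ (EuclideanSpace ℝ (Fin d))) (∫ y, g y ∂μ) := by
    ext w
    rw [ContinuousLinearMap.integral_apply hF'int, InnerProductSpace.toDual_apply_apply,
      real_inner_comm, ← integral_inner hgint]
    refine integral_congr_ae (Filter.Eventually.of_forall fun y => ?_)
    rw [hF'def, hgdef]
    simp only [ContinuousLinearMap.smul_apply, innerSL_apply_apply, smul_eq_mul,
      real_inner_smul_right]
    rw [real_inner_comm]
  have hgrad : HasGradientAt p (∫ y, g y ∂μ) x := by
    rw [hasGradientAt_iff_hasFDerivAt, ← key]; exact hp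
  have hlog : HasGradientAt (fun x' => Real.log (p x')) ((p x)⁻¹ • ∫ y, g y ∂μ) x := by
    rw [hasGradientAt_iff_hasFDerivAt]
    have hmaps : (InnerProductSpace.toDual ℝ (EuclideanSpace ℝ (Fin d)))
        ((p x)⁻¹ • ∫ y, g y ∂μ)
        = (p x)⁻¹ • (InnerProductSpace.toDual ℝ (EuclideanSpace ℝ (Fin d)))
            (∫ y, g y ∂μ) := by simp
    rw [hmaps]
    exact (Real.hasDerivAt_log hpne).comp_hasFDerivAt x hgrad.hasFDerivAt
  have hgr := hlog.gradient
  show gradient (fun x' => Real.log (p x')) x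
    = (1 / σ ^ 2) • (-x + α • ((p x)⁻¹ • ∫ y, gaussDensity d σ (x - α • y) • y ∂μ))
  rw [hgr]
  -- compute ∫ g
  have hBint : Integrable (fun y : EuclideanSpace ℝ (Fin d) =>
      gaussDensity d σ (x - α • y) • y) μ := by
    refine (integrable_const ((C * σ + C * ‖x‖) / α)).mono'
      ((φcont.comp (hzcont x)).smul continuous_id).aestronglyMeasurable
      (Filter.Eventually.of_forall fun y => ?_)
    rw [norm_smul, Real.norm_eq_abs, abs_of_pos (gaussDensity_pos hσ _)]
    have h1 : α * ‖y‖ ≤ ‖x‖ + ‖x - α • y‖ := by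
      have hxy : α • y = x - (x - α • y) := by abel
      calc α * ‖y‖ = ‖α • y‖ := by
            rw [norm_smul, Real.norm_eq_abs, abs_of_pos hα]
        _ = ‖x - (x - α • y)‖ := by rw [← hxy]
        _ ≤ ‖x‖ + ‖x - α • y‖ := norm_sub_le _ _
    have hφpos := gaussDensity_pos hσ (x - α • y)
    have h2 : gaussDensity d σ (x - α • y) * (α * ‖y‖) ≤ C * σ + C * ‖x‖ := by
      have h3 : gaussDensity d σ (x - α • y) * (α * ‖y‖)
          ≤ gaussDensity d σ (x - α • y) * (‖x‖ + ‖x - α • y‖) :=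
        mul_le_mul_of_nonneg_left h1 hφpos.le
      have h4 : gaussDensity d σ (x - α • y) * ‖x‖ ≤ C * ‖x‖ :=
        mul_le_mul_of_nonneg_right (gaussDensity_le hσ _) (norm_nonneg _)
      have h5 := gaussDensity_mul_norm_le hσ (x - α • y)
      nlinarith [norm_nonneg x]
    rw [le_div_iff₀ hα]
    nlinarith
  have hAint : Integrable (fun y : EuclideanSpace ℝ (Fin d) =>
      (-(σ ^ 2)⁻¹ * gaussDensity d σ (x - α • y)) • x) μ :=
    ((hFint x).const_mul _).smul_const x
  have hgsplit : g = fun y => (-(σ ^ 2)⁻¹ * gaussDensity d σ (x - α • y)) • x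
      - (-(σ ^ 2)⁻¹ * α) • (gaussDensity d σ (x - α • y) • y) := by
    rw [hgdef]
    funext y
    match_scalars <;> ring
  have hB2 : Integrable (fun y : EuclideanSpace ℝ (Fin d) =>
      (-(σ ^ 2)⁻¹ * α) • (gaussDensity d σ (x - α • y) • y)) μ :=
    hBint.smul ((-(σ ^ 2)⁻¹ * α))
  simp only [hgsplit]
  rw [integral_sub hAint hB2, integral_smul, integral_smul_const,
    integral_const_mul]
  -- final algebra
  have hfin : (p x)⁻¹ • ((-(σ ^ 2)⁻¹ * p x) • x
      - (-(σ ^ 2)⁻¹ * α) • ∫ y, gaussDensity d σ (x - α • y) • y ∂μ)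
      = (1 / σ ^ 2) • (-x + α • ((p x)⁻¹ • ∫ y, gaussDensity d σ (x - α • y) • y ∂μ)) := by
    match_scalars
    · field_simp
    · ring
  exact hfin
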